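/- Let D ⊆ ℝⁿ be open, ε₀ > 0, T > 0, and let F : ℝ × D × [0, ε₀] → ℝⁿ be continuous and T-periodic in its first variable. Let V ⊆ ℝⁿ be a bounded open set with closure(V) ⊆ D and let ε₁ ∈ (0, ε₀]. Assume: (i) (hypothesis (H)) for each λ ∈ (0, 1] and ε ∈ (0, ε₁], any T-periodic solution of x' = ε λ F(t, x, ε) taking values in closure(V) takes values in V; and (ii) for every z ∈ ∂V and ε ∈ (0, ε₁], ∫₀ᵀ F(s, z, ε) ds ≠ 0. Then there exists ε₁' ∈ (0, ε₁] such that for every ε ∈ (0, ε₁'], every λ ∈ [0, 1], and every continuous x : [0, T] → ℝⁿ with x(0) = x(T), x(t) ∈ closure(V) for all t, and x(t₀) ∈ ∂V for some t₀ ∈ [0, T], there exists t ∈ [0, T] with x(t) − x(0) + (λ ε t / T + 1) ∫₀ᵀ F(s, x(s), ε) ds − λ ε ∫₀ᵗ F(s, x(s), ε) ds ≠ 0. -/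

import Mathlib

open MeasureTheory

/-- Condition (C) in the proof of Theorem A: under hypothesis (H) and nonvanishing of
`∫₀ᵀ F(s, z, ε) ds` on `∂V`, there is `ε₁' ∈ (0, ε₁]` such that for all `ε ∈ (0, ε₁']`,
`λ ∈ [0, 1]`, and continuous `x : [0,T] → closure V` with `x(0) = x(T)` touching `∂V`,
the homotopy expression
`x(t) − x(0) + (λεt/T + 1)∫₀ᵀ F(s,x(s),ε) ds − λε ∫₀ᵗ F(s,x(s),ε) ds`
is nonzero for some `t ∈ [0, T]`. -/
theorem stmt_10 (n : ℕ) (D : Set (EuclideanSpace ℝ (Fin n))) (hD : IsOpen D)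
    (ε₀ T : ℝ) (hε₀ : 0 < ε₀) (hT : 0 < T)
    (F : ℝ → EuclideanSpace ℝ (Fin n) → ℝ → EuclideanSpace ℝ (Fin n))
    (hFcont : ContinuousOn
      (fun p : ℝ × EuclideanSpace ℝ (Fin n) × ℝ => F p.1 p.2.1 p.2.2)
      (Set.univ ×ˢ D ×ˢ Set.Icc 0 ε₀))
    (hFper : ∀ t z e, F (t + T) z e = F t z e)
    (V : Set (EuclideanSpace ℝ (Fin n))) (hVopen : IsOpen V)
    (hVbdd : Bornology.IsBounded V) (hVD : closure V ⊆ D)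
    (ε₁ : ℝ) (hε₁ : ε₁ ∈ Set.Ioc 0 ε₀)
    -- (i) hypothesis (H)
    (hH : ∀ l ∈ Set.Ioc (0:ℝ) 1, ∀ ε ∈ Set.Ioc (0:ℝ) ε₁,
      ∀ x : ℝ → EuclideanSpace ℝ (Fin n),
        Function.Periodic x T → ContDiff ℝ 1 x → (∀ t, x t ∈ D) →
        (∀ t, HasDerivAt x ((ε * l) • F t (x t) ε) t) →
        (∀ t, x t ∈ closure V) → ∀ t, x t ∈ V)
    -- (ii) nonvanishing of the averaged integral on the boundary of V
    (hbd : ∀ z ∈ frontier V, ∀ ε ∈ Set.Ioc (0:ℝ) ε₁,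
      (∫ s in (0:ℝ)..T, F s z ε) ≠ 0) :
    ∃ ε₁' ∈ Set.Ioc 0 ε₁, ∀ ε ∈ Set.Ioc (0:ℝ) ε₁', ∀ l ∈ Set.Icc (0:ℝ) 1,
      ∀ x : ℝ → EuclideanSpace ℝ (Fin n),
        ContinuousOn x (Set.Icc 0 T) → x 0 = x T →
        (∀ t ∈ Set.Icc (0:ℝ) T, x t ∈ closure V) →
        (∃ t₀ ∈ Set.Icc (0:ℝ) T, x t₀ ∈ frontier V) →
        ∃ t ∈ Set.Icc (0:ℝ) T,
          x t - x 0 + (l * ε * t / T + 1) • (∫ s in (0:ℝ)..T, F s (x s) ε)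
            - (l * ε) • (∫ s in (0:ℝ)..t, F s (x s) ε) ≠ 0 := by
  obtain ⟨hε₁0, hε₁ε₀⟩ := hε₁
  refine ⟨ε₁, ⟨hε₁0, le_refl _⟩, ?_⟩
  rintro ε ⟨hε0, hεε₁⟩ l ⟨hl0, hl1⟩ x hxc hx0T hxcl ⟨t₀, ht₀, hfr₀⟩
  by_contra hcon
  push_neg at hcon
  have hεIcc : ε ∈ Set.Icc (0:ℝ) ε₀ := ⟨hε0.le, hεε₁.trans hε₁ε₀⟩
  -- the full-period integral vanishes
  have hI0 : (∫ s in (0:ℝ)..T, F s (x s) ε) = 0 := by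
    have h0 := hcon 0 ⟨le_refl 0, hT.le⟩
    simpa using h0
  -- on [0,T], x satisfies the integral equation
  have hxeq : ∀ t ∈ Set.Icc (0:ℝ) T,
      x t = x 0 + (l * ε) • ∫ s in (0:ℝ)..t, F s (x s) ε := by
    intro t ht
    have h := hcon t ht
    rw [hI0, smul_zero, add_zero, sub_eq_zero, sub_eq_iff_eq_add] at h
    rw [h, add_comm]
  -- frontier points are not in V
  have hfrV : x t₀ ∉ V := by
    have : x t₀ ∉ interior V := hfr₀.2
    rwa [hVopen.interior_eq] at this
  rcases eq_or_lt_of_le hl0 with hl | hl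
  · -- l = 0 : x is constant on [0,T], contradict hbd
    have hconst : ∀ t ∈ Set.Icc (0:ℝ) T, x t = x t₀ := by
      intro t ht
      rw [hxeq t ht, hxeq t₀ ht₀, ← hl, zero_mul, zero_smul, zero_smul]
    have : (∫ s in (0:ℝ)..T, F s (x s) ε) = ∫ s in (0:ℝ)..T, F s (x t₀) ε := by
      apply intervalIntegral.integral_congr
      intro s hs
      rw [Set.uIcc_of_le hT.le] at hs
      simp [hconst s hs]
    exact hbd (x t₀) hfr₀ ε ⟨hε0, hεε₁⟩ (this ▸ hI0)
  · -- l > 0 : build a genuine T-periodic C¹ solution, contradict (H)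
    -- periodic continuous extension of x
    haveI : Fact (0 < T) := ⟨hT⟩
    have hx0T' : x 0 = x (0 + T) := by rwa [zero_add]
    have hxcIcc : ContinuousOn x (Set.Icc 0 (0 + T)) := by rwa [zero_add]
    set x' : ℝ → EuclideanSpace ℝ (Fin n) :=
      fun t => AddCircle.liftIco T 0 x (t : AddCircle T) with hx'def
    have hx'per : Function.Periodic x' T := by
      intro t
      simp only [hx'def, AddCircle.coe_add_period]
    have hx'cont : Continuous x' :=
      (AddCircle.liftIco_continuous hx0T' hxcIcc).comp continuous_quotient_mk'
    have hx'eq : ∀ t ∈ Set.Ico (0:ℝ) T, x' t = x t := by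
      intro t ht
      exact AddCircle.liftIco_coe_apply (by rwa [zero_add])
    have hx'Icc : ∀ t ∈ Set.Icc (0:ℝ) T, x' t = x t := by
      intro t ht
      rcases lt_or_eq_of_le ht.2 with h | h
      · exact hx'eq t ⟨ht.1, h⟩
      · have h1 : x' (0 + T) = x' 0 := hx'per 0
        rw [zero_add] at h1
        rw [h, h1, hx'eq 0 ⟨le_refl 0, hT⟩, hx0T]
    -- reduction to [0,T) for arbitrary reals
    have hfrac : ∀ t : ℝ, t - (⌊t / T⌋ : ℝ) * T ∈ Set.Ico (0:ℝ) T := by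
      intro t
      exact ⟨Int.sub_floor_div_mul_nonneg t hT, Int.sub_floor_div_mul_lt t hT⟩
    have hx'cl : ∀ t, x' t ∈ closure V := by
      intro t
      have := hx'per.sub_int_mul_eq (x := t) ⌊t / T⌋
      rw [← this, hx'eq _ (hfrac t)]
      exact hxcl _ (Set.Ico_subset_Icc_self (hfrac t))
    -- the vector field along the extension
    set h : ℝ → EuclideanSpace ℝ (Fin n) := fun t => F t (x' t) ε with hhdef
    have hhcont : Continuous h := by
      have hmap : ∀ t : ℝ,
          (t, x' t, ε) ∈ (Set.univ ×ˢ D ×ˢ Set.Icc 0 ε₀ :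
            Set (ℝ × EuclideanSpace ℝ (Fin n) × ℝ)) := by
        intro t
        exact ⟨trivial, hVD (hx'cl t), hεIcc⟩
      exact hFcont.comp_continuous
        (continuous_id.prodMk (hx'cont.prodMk continuous_const)) hmap
    have hhper : Function.Periodic h T := by
      intro t
      simp only [hhdef, hFper, hx'per t]
    have hheqIcc : ∀ t ∈ Set.Icc (0:ℝ) T,
        (∫ s in (0:ℝ)..t, h s) = ∫ s in (0:ℝ)..t, F s (x s) ε := by
      intro t ht
      apply intervalIntegral.integral_congr
      intro s hs
      rw [Set.uIcc_of_le ht.1] at hs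
      have hs' : s ∈ Set.Icc (0:ℝ) T := ⟨hs.1, hs.2.trans ht.2⟩
      simp only [hhdef, hx'Icc s hs']
    have hIh : (∫ s in (0:ℝ)..T, h s) = 0 := by
      rw [hheqIcc T ⟨hT.le, le_refl T⟩, hI0]
    -- the candidate solution
    set Y : ℝ → EuclideanSpace ℝ (Fin n) :=
      fun t => x 0 + (ε * l) • ∫ s in (0:ℝ)..t, h s with hYdef
    have hYder : ∀ t, HasDerivAt Y ((ε * l) • h t) t := by
      intro t
      have h1 : HasDerivAt (fun u => ∫ s in (0:ℝ)..u, h s) (h t) t :=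
        intervalIntegral.integral_hasDerivAt_right (hhcont.intervalIntegrable _ _)
          (hhcont.stronglyMeasurable.stronglyMeasurableAtFilter) hhcont.continuousAt
      exact (h1.const_smul (ε * l)).const_add (x 0)
    have hYper : Function.Periodic Y T := by
      intro t
      have hadj : (∫ s in (0:ℝ)..(t + T), h s)
          = (∫ s in (0:ℝ)..t, h s) + ∫ s in t..(t + T), h s :=
        (intervalIntegral.integral_add_adjacent_intervals
          (hhcont.intervalIntegrable _ _) (hhcont.intervalIntegrable _ _)).symm
      have hper : (∫ s in t..(t + T), h s) = ∫ s in (0:ℝ)..(0 + T), h s :=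
        hhper.intervalIntegral_add_eq t 0
      rw [zero_add] at hper
      simp only [hYdef, hadj, hper, hIh, add_zero]
    have hYIcc : ∀ t ∈ Set.Icc (0:ℝ) T, Y t = x t := by
      intro t ht
      rw [hYdef]
      simp only
      rw [hheqIcc t ht, mul_comm ε l, ← hxeq t ht]
    have hYx' : ∀ t, Y t = x' t := by
      intro t
      have h1 := hYper.sub_int_mul_eq (x := t) ⌊t / T⌋
      have h2 := hx'per.sub_int_mul_eq (x := t) ⌊t / T⌋
      rw [← h1, ← h2, hYIcc _ (Set.Ico_subset_Icc_self (hfrac t)),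
        hx'eq _ (hfrac t)]
    have hYcl : ∀ t, Y t ∈ closure V := fun t => (hYx' t) ▸ hx'cl t
    have hYder' : ∀ t, HasDerivAt Y ((ε * l) • F t (Y t) ε) t := by
      intro t
      rw [hYx' t]
      simpa only [hhdef] using hYder t
    have hYc1 : ContDiff ℝ 1 Y := by
      rw [contDiff_one_iff_deriv]
      refine ⟨fun t => (hYder t).differentiableAt, ?_⟩
      have hde : deriv Y = fun t => (ε * l) • h t := funext fun t => (hYder t).deriv
      rw [hde]
      exact (continuous_const (y := (ε * l : ℝ))).smul hhcont
    have hYV : ∀ t, Y t ∈ V :=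
      hH l ⟨hl, hl1⟩ ε ⟨hε0, hεε₁⟩ Y hYper hYc1 (fun t => hVD (hYcl t)) hYder' hYcl
    have : x t₀ ∈ V := by
      rw [← hYIcc t₀ ht₀]
      exact hYV t₀
    exact hfrV this
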